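/- Let ε ∈ (0,1) and let {p_n} and {q_n} be sequences of positive integers with ε ≤ p_n/q_n ≤ ε^{−1} for all n and p_n → ∞. For each n, let X_n be a p_n × q_n random matrix with i.i.d. standard normal entries. Then Cov(tr(X_nᵀX_n), tr((X_nᵀX_n)²)) ~ 4 p_n q_n (p_n + q_n) as n → ∞. -/

import Mathlib

open MeasureTheory ProbabilityTheory Filter Matrix

/-- The covariance `Cov(f,g) = E[(f − E f)(g − E g)]` of two real random variables with
respect to the measure `μ`. -/
noncomputable def rvCov {Ω : Type*} [MeasurableSpace Ω] (f g : Ω → ℝ) (μ : Measure Ω) : ℝ :=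
  ∫ ω, (f ω - ∫ ω', f ω' ∂μ) * (g ω - ∫ ω', g ω' ∂μ) ∂μ

section JiangCovProof

open Real
open scoped ENNReal NNReal

noncomputable section
namespace JiangCov

lemma integrable_pow_exp (k : ℕ) :
    Integrable (fun x : ℝ => x ^ k * Real.exp (-(1/2) * x ^ 2)) := by
  have h := integrable_rpow_mul_exp_neg_mul_sq (b := (1:ℝ)/2) (by norm_num)
      (s := (k : ℝ)) (lt_of_lt_of_le neg_one_lt_zero (Nat.cast_nonneg k))
  simpa [Real.rpow_natCast] using h

lemma hasDerivAt_c (x : ℝ) :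
    HasDerivAt (fun x : ℝ => Real.exp (-(1/2) * x ^ 2))
      (Real.exp (-(1/2) * x ^ 2) * (-(1/2) * (2 * x))) x := by
  have : HasDerivAt (fun x : ℝ => -(1/2 : ℝ) * x ^ 2) (-(1/2) * (2 * x)) x := by
    simpa using (hasDerivAt_pow 2 x).const_mul (-(1/2) : ℝ)
  exact this.exp

lemma I_rec (k : ℕ) :
    ∫ x : ℝ, x ^ (k + 2) * Real.exp (-(1/2) * x ^ 2)
      = (k + 1) * ∫ x : ℝ, x ^ k * Real.exp (-(1/2) * x ^ 2) := by
  have hderiv : ∀ x : ℝ, HasDerivAt (fun x : ℝ => x ^ (k+1) * Real.exp (-(1/2) * x ^ 2))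
      (((k:ℝ)+1) * (x ^ k * Real.exp (-(1/2) * x ^ 2))
        - x ^ (k+2) * Real.exp (-(1/2) * x ^ 2)) x := by
    intro x
    have h1 : HasDerivAt (fun x : ℝ => x ^ (k+1)) (((k:ℝ)+1) * x ^ k) x := by
      have := hasDerivAt_pow (k+1) x
      push_cast at this
      simpa using this
    have h3 : HasDerivAt (fun x : ℝ => x ^ (k+1) * Real.exp (-(1/2) * x ^ 2)) _ x :=
      h1.mul (hasDerivAt_c x)
    convert h3 using 1
    ring
  have hik : Integrable (fun x : ℝ => ((k:ℝ)+1) * (x ^ k * Real.exp (-(1/2) * x ^ 2))) :=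
    (integrable_pow_exp k).const_mul _
  have hint : Integrable (fun x : ℝ => ((k:ℝ)+1) * (x ^ k * Real.exp (-(1/2) * x ^ 2))
      - x ^ (k+2) * Real.exp (-(1/2) * x ^ 2)) := hik.sub (integrable_pow_exp (k+2))
  have h0 := integral_eq_zero_of_hasDerivAt_of_integrable hderiv hint (integrable_pow_exp (k+1))
  rw [integral_sub hik (integrable_pow_exp (k+2)), integral_const_mul] at h0
  linarith

lemma I_one : ∫ x : ℝ, x ^ 1 * Real.exp (-(1/2) * x ^ 2) = 0 := by
  have hderiv : ∀ x : ℝ, HasDerivAt (fun x : ℝ => -Real.exp (-(1/2) * x ^ 2))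
      (x ^ 1 * Real.exp (-(1/2) * x ^ 2)) x := by
    intro x
    have : HasDerivAt (fun x : ℝ => -Real.exp (-(1/2) * x ^ 2)) _ x := (hasDerivAt_c x).neg
    convert this using 1
    ring
  exact integral_eq_zero_of_hasDerivAt_of_integrable hderiv (integrable_pow_exp 1)
    ((integrable_pow_exp 0).neg.congr (ae_of_all _ (fun x => by simp)))

lemma I_zero : ∫ x : ℝ, x ^ 0 * Real.exp (-(1/2) * x ^ 2) = Real.sqrt (2 * π) := by
  simp only [pow_zero, one_mul]
  rw [show (fun x : ℝ => Real.exp (-(1/2) * x ^ 2)) = fun x : ℝ => Real.exp (-(1/2 : ℝ) * x ^ 2)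
    from rfl]
  rw [integral_gaussian]
  rw [show π / (1/2 : ℝ) = 2 * π by ring]


/-- `k`-th moment of the standard gaussian. -/
def M (k : ℕ) : ℝ := ∫ x, x ^ k ∂(gaussianReal 0 1)

lemma gauss_eq : gaussianReal 0 1
    = (volume : Measure ℝ).withDensity (fun x => ((gaussianPDFReal 0 1 x).toNNReal : ℝ≥0∞)) := by
  rw [gaussianReal_of_var_ne_zero 0 one_ne_zero]
  rfl

lemma pdf_eq (x : ℝ) : gaussianPDFReal 0 1 x = (Real.sqrt (2 * π))⁻¹ * Real.exp (-(1/2) * x ^ 2) := by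
  simp only [gaussianPDFReal, NNReal.coe_one, mul_one, one_div, zero_sub, neg_neg]
  congr 1
  ring

lemma M_eq (k : ℕ) : M k = (Real.sqrt (2 * π))⁻¹ * ∫ x : ℝ, x ^ k * Real.exp (-(1/2) * x ^ 2) := by
  rw [M, gauss_eq, integral_withDensity_eq_integral_smul
    (measurable_gaussianPDFReal 0 1).real_toNNReal]
  rw [← integral_const_mul]
  congr 1
  funext x
  rw [NNReal.smul_def, smul_eq_mul, Real.coe_toNNReal _ (gaussianPDFReal_nonneg 0 1 x), pdf_eq]
  ring

lemma integrable_M (k : ℕ) : Integrable (fun x : ℝ => x ^ k) (gaussianReal 0 1) := by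
  rw [gauss_eq, integrable_withDensity_iff]
  · refine ((integrable_pow_exp k).const_mul ((Real.sqrt (2 * π))⁻¹)).congr (ae_of_all _ ?_)
    intro x
    have h : (((gaussianPDFReal 0 1 x).toNNReal : ℝ≥0∞)).toReal = gaussianPDFReal 0 1 x := by
      simp [Real.coe_toNNReal _ (gaussianPDFReal_nonneg 0 1 x)]
    dsimp only
    rw [h, pdf_eq]
    ring
  · exact (measurable_gaussianPDFReal 0 1).real_toNNReal.coe_nnreal_ennreal
  · exact ae_of_all _ (fun x => ENNReal.coe_lt_top)

lemma sqrt_two_pi_ne : (Real.sqrt (2 * π)) ≠ 0 := by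
  positivity

lemma M_zero : M 0 = 1 := by rw [M_eq, I_zero, inv_mul_cancel₀ sqrt_two_pi_ne]
lemma M_one : M 1 = 0 := by rw [M_eq, I_one, mul_zero]
lemma M_two : M 2 = 1 := by
  rw [M_eq, I_rec 0, I_zero]
  push_cast
  field_simp
  ring
lemma M_three : M 3 = 0 := by rw [M_eq, I_rec 1, I_one, mul_zero, mul_zero]
lemma M_four : M 4 = 3 := by
  rw [M_eq, I_rec 2, I_rec 0, I_zero]
  push_cast
  field_simp
  ring
lemma M_five : M 5 = 0 := by rw [M_eq, I_rec 3, I_rec 1, I_one]; simp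
lemma M_six : M 6 = 15 := by
  rw [M_eq, I_rec 4, I_rec 2, I_rec 0, I_zero]
  push_cast
  field_simp
  ring



lemma M_def (k : ℕ) : M k = ∫ x, x ^ k ∂(gaussianReal 0 1) := rfl

theorem integral_pi' {ι : Type*} [Fintype ι] {E : ι → Type*} [∀ i, MeasurableSpace (E i)]
    (μ : ∀ i, Measure (E i)) [h : ∀ i, SigmaFinite (μ i)] (f : ∀ i, E i → ℝ) :
    ∫ x : ∀ i, E i, ∏ i, f i (x i) ∂(Measure.pi μ) = ∏ i, ∫ x, f i x ∂(μ i) := by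
  letI : ∀ i, MeasureSpace (E i) := fun i => ⟨μ i⟩
  haveI : ∀ i, SigmaFinite (volume : Measure (E i)) := h
  exact MeasureTheory.integral_fintype_prod_eq_prod f

theorem integrable_pi' {ι : Type*} [Fintype ι] {E : ι → Type*} [∀ i, MeasurableSpace (E i)]
    (μ : ∀ i, Measure (E i)) [h : ∀ i, SigmaFinite (μ i)] (f : ∀ i, E i → ℝ)
    (hf : ∀ i, Integrable (f i) (μ i)) :
    Integrable (fun x : ∀ i, E i => ∏ i, f i (x i)) (Measure.pi μ) := by
  letI : ∀ i, MeasureSpace (E i) := fun i => ⟨μ i⟩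
  haveI : ∀ i, SigmaFinite (volume : Measure (E i)) := h
  exact Integrable.fintype_prod_dep hf


/-- the product gaussian measure -/
def ν (P Q : ℕ) : Measure (Fin P → Fin Q → ℝ) :=
  Measure.pi fun _ => Measure.pi fun _ => gaussianReal 0 1

instance (P Q : ℕ) : IsProbabilityMeasure (ν P Q) := by unfold ν; infer_instance

variable {P Q : ℕ}

/-- indicator exponent -/
def dlt (u : Fin P) (v : Fin Q) (m : ℕ) : Fin P → Fin Q → ℕ :=
  fun r c => if (r, c) = (u, v) then m else 0

lemma mono_integral (e : Fin P → Fin Q → ℕ) :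
    ∫ x, (∏ r, ∏ c, x r c ^ e r c) ∂(ν P Q) = ∏ r, ∏ c, M (e r c) := by
  rw [ν, integral_pi' _ (fun r => fun y : Fin Q → ℝ => ∏ c, y c ^ e r c)]
  refine Finset.prod_congr rfl fun r _ => ?_
  rw [integral_pi' _ (fun c => fun t : ℝ => t ^ e r c)]
  exact Finset.prod_congr rfl fun c _ => (M_def (e r c)).symm

lemma mono_integrable (e : Fin P → Fin Q → ℕ) :
    Integrable (fun x => ∏ r, ∏ c, x r c ^ e r c) (ν P Q) :=
  integrable_pi' _ (fun r => fun y : Fin Q → ℝ => ∏ c, y c ^ e r c)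
    (fun r => integrable_pi' _ (fun c => fun t : ℝ => t ^ e r c)
      (fun c => integrable_M (e r c)))

lemma pow_eq_Pm (x : Fin P → Fin Q → ℝ) (u : Fin P) (v : Fin Q) (m : ℕ) :
    x u v ^ m = ∏ r, ∏ c, x r c ^ dlt u v m r c := by
  rw [Finset.prod_eq_single u (fun r _ hr => Finset.prod_eq_one fun c _ => by
      simp [dlt, Prod.ext_iff, hr]) (by simp)]
  rw [Finset.prod_eq_single v (fun c _ hc => by simp [dlt, Prod.ext_iff, hc]) (by simp)]
  simp [dlt]

lemma Pm_mul (x : Fin P → Fin Q → ℝ) (e₁ e₂ : Fin P → Fin Q → ℕ) :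
    (∏ r, ∏ c, x r c ^ e₁ r c) * (∏ r, ∏ c, x r c ^ e₂ r c)
      = ∏ r, ∏ c, x r c ^ (e₁ + e₂) r c := by
  rw [← Finset.prod_mul_distrib]
  refine Finset.prod_congr rfl fun r _ => ?_
  rw [← Finset.prod_mul_distrib]
  exact Finset.prod_congr rfl fun c _ => by simp [pow_add]

lemma prod_eval (F : Fin P → Fin Q → ℝ) (s : Finset (Fin P × Fin Q))
    (h : ∀ z : Fin P × Fin Q, z ∉ s → F z.1 z.2 = 1) :
    (∏ r, ∏ c, F r c) = ∏ z ∈ s, F z.1 z.2 := by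
  rw [← Finset.prod_product']
  exact (Finset.prod_subset (Finset.subset_univ s) (fun z _ hz => h z hz)).symm


lemma dlt_def {P Q : ℕ} (u : Fin P) (v : Fin Q) (m : ℕ) (r : Fin P) (c : Fin Q) :
    dlt u v m r c = if (r, c) = (u, v) then m else 0 := rfl

attribute [simp] dlt_def

lemma sq_pt (x : Fin P → Fin Q → ℝ) (i : Fin P) (j : Fin Q) :
    x i j ^ 2 = ∏ r, ∏ c, x r c ^ dlt i j 2 r c := pow_eq_Pm x i j 2

lemma int_sq (i : Fin P) (j : Fin Q) : ∫ x, x i j ^ 2 ∂(ν P Q) = 1 := by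
  simp_rw [sq_pt]
  rw [mono_integral, prod_eval _ {(i, j)} (fun z hz => by
    simp only [Finset.mem_singleton] at hz
    simp [hz, M_zero])]
  simp [M_two]

def qE (i i' : Fin P) (j k : Fin Q) : Fin P → Fin Q → ℕ :=
  (dlt i j 1 + dlt i k 1) + (dlt i' k 1 + dlt i' j 1)

lemma quartic_pt (x : Fin P → Fin Q → ℝ) (i i' : Fin P) (j k : Fin Q) :
    (x i j * x i k) * (x i' k * x i' j) = ∏ r, ∏ c, x r c ^ qE i i' j k r c := by
  have h1 := pow_eq_Pm x i j 1
  have h2 := pow_eq_Pm x i k 1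
  have h3 := pow_eq_Pm x i' k 1
  have h4 := pow_eq_Pm x i' j 1
  rw [pow_one] at h1 h2 h3 h4
  rw [h1, h2, h3, h4, Pm_mul, Pm_mul, Pm_mul]
  rfl

lemma quartic_integrable (i i' : Fin P) (j k : Fin Q) :
    Integrable (fun x => (x i j * x i k) * (x i' k * x i' j)) (ν P Q) := by
  simp_rw [quartic_pt]
  exact mono_integrable _

lemma quartic_val (i i' : Fin P) (j k : Fin Q) :
    ∫ x, (x i j * x i k) * (x i' k * x i' j) ∂(ν P Q)
      = if j = k then (if i = i' then 3 else 1) else (if i = i' then 1 else 0) := by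
  simp_rw [quartic_pt]
  rw [mono_integral]
  rcases eq_or_ne j k with rfl | hjk
  · rcases eq_or_ne i i' with rfl | hii
    · rw [prod_eval _ {(i, j)} (fun z hz => by
        simp only [Finset.mem_singleton] at hz
        simp [qE, hz, M_zero])]
      simp [qE, M_four]
    · rw [prod_eval _ {(i, j), (i', j)} (fun z hz => by
        simp only [Finset.mem_insert, Finset.mem_singleton, not_or] at hz
        simp [qE, hz.1, hz.2, M_zero])]
      rw [Finset.prod_pair (by simp [Prod.ext_iff, hii])]
      simp [qE, Prod.ext_iff, hii, hii.symm, M_two]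
  · rcases eq_or_ne i i' with rfl | hii
    · rw [prod_eval _ {(i, j), (i, k)} (fun z hz => by
        simp only [Finset.mem_insert, Finset.mem_singleton, not_or] at hz
        simp [qE, hz.1, hz.2, M_zero])]
      rw [Finset.prod_pair (by simp [Prod.ext_iff, hjk])]
      simp [qE, Prod.ext_iff, hjk, hjk.symm, M_two]
    · have hz : (∏ r, ∏ c, M (qE i i' j k r c)) = 0 := by
        refine Finset.prod_eq_zero (Finset.mem_univ i) ?_
        refine Finset.prod_eq_zero (Finset.mem_univ j) ?_
        have he : qE i i' j k i j = 1 := by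
          simp [qE, Prod.ext_iff, hjk, hjk.symm, hii, hii.symm]
        rw [he, M_one]
      rw [hz, if_neg hjk, if_neg hii]


def sE (a : Fin P) (b : Fin Q) (i i' : Fin P) (j k : Fin Q) : Fin P → Fin Q → ℕ :=
  dlt a b 2 + qE i i' j k

lemma sextic_pt (x : Fin P → Fin Q → ℝ) (a : Fin P) (b : Fin Q) (i i' : Fin P) (j k : Fin Q) :
    x a b ^ 2 * ((x i j * x i k) * (x i' k * x i' j))
      = ∏ r, ∏ c, x r c ^ sE a b i i' j k r c := by
  rw [sq_pt, quartic_pt, Pm_mul]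
  rfl

lemma sextic_integrable (a : Fin P) (b : Fin Q) (i i' : Fin P) (j k : Fin Q) :
    Integrable (fun x => x a b ^ 2 * ((x i j * x i k) * (x i' k * x i' j))) (ν P Q) := by
  simp_rw [sextic_pt]
  exact mono_integrable _

lemma sextic_val (a : Fin P) (b : Fin Q) (i i' : Fin P) (j k : Fin Q) :
    ∫ x, x a b ^ 2 * ((x i j * x i k) * (x i' k * x i' j)) ∂(ν P Q)
      = if j = k then
          (if i = i' then (if a = i ∧ b = j then 15 else 3)
           else (if (a = i ∧ b = j) ∨ (a = i' ∧ b = j) then 3 else 1))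
        else
          (if i = i' then (if (a = i ∧ b = j) ∨ (a = i ∧ b = k) then 3 else 1) else 0) := by
  simp_rw [sextic_pt]
  rw [mono_integral]
  rcases eq_or_ne j k with rfl | hjk
  · rcases eq_or_ne i i' with rfl | hii
    · by_cases hab : a = i ∧ b = j
      · obtain ⟨rfl, rfl⟩ := hab
        rw [prod_eval _ {(a, b)} (fun z hz => by
          simp only [Finset.mem_singleton] at hz
          simp [sE, qE, hz, M_zero])]
        simp [sE, qE, M_six]
      · have n1 : ¬(i = a ∧ j = b) := fun h => hab ⟨h.1.symm, h.2.symm⟩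
        rw [prod_eval _ {(a, b), (i, j)} (fun z hz => by
          simp only [Finset.mem_insert, Finset.mem_singleton, not_or] at hz
          simp [sE, qE, hz.1, hz.2, M_zero])]
        rw [Finset.prod_pair (by simp only [ne_eq, Prod.mk.injEq]; tauto)]
        simp [sE, qE, hab, n1, M_two, M_four]
    · by_cases h1 : a = i ∧ b = j
      · rw [prod_eval _ {(i, j), (i', j)} (fun z hz => by
          simp only [Finset.mem_insert, Finset.mem_singleton, not_or] at hz
          simp [sE, qE, h1.1, h1.2, hz.1, hz.2, M_zero])]
        rw [Finset.prod_pair (by simp only [ne_eq, Prod.mk.injEq]; tauto)]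
        simp [sE, qE, h1.1, h1.2, hii, Ne.symm hii, M_two, M_four]
      · by_cases h2 : a = i' ∧ b = j
        · rw [prod_eval _ {(i, j), (i', j)} (fun z hz => by
            simp only [Finset.mem_insert, Finset.mem_singleton, not_or] at hz
            simp [sE, qE, h2.1, h2.2, hz.1, hz.2, M_zero])]
          rw [Finset.prod_pair (by simp only [ne_eq, Prod.mk.injEq]; tauto)]
          simp [sE, qE, h2.1, h2.2, hii, Ne.symm hii, h1, M_two, M_four]
        · have n1 : ¬(i = a ∧ j = b) := fun h => h1 ⟨h.1.symm, h.2.symm⟩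
          have n2 : ¬(i' = a ∧ j = b) := fun h => h2 ⟨h.1.symm, h.2.symm⟩
          rw [prod_eval _ {(a, b), (i, j), (i', j)} (fun z hz => by
            simp only [Finset.mem_insert, Finset.mem_singleton, not_or] at hz
            simp [sE, qE, hz.1, hz.2.1, hz.2.2, M_zero])]
          rw [Finset.prod_insert (by simp only [Finset.mem_insert,
              Finset.mem_singleton, Prod.mk.injEq]; tauto),
            Finset.prod_pair (by simp only [ne_eq, Prod.mk.injEq]; tauto)]
          simp [sE, qE, h1, h2, n1, n2, hii, Ne.symm hii, M_two]
  · rcases eq_or_ne i i' with rfl | hii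
    · by_cases h1 : a = i ∧ b = j
      · rw [prod_eval _ {(i, j), (i, k)} (fun z hz => by
          simp only [Finset.mem_insert, Finset.mem_singleton, not_or] at hz
          simp [sE, qE, h1.1, h1.2, hz.1, hz.2, M_zero])]
        rw [Finset.prod_pair (by simp only [ne_eq, Prod.mk.injEq]; tauto)]
        simp [sE, qE, h1.1, h1.2, hjk, Ne.symm hjk, M_two, M_four]
      · by_cases h2 : a = i ∧ b = k
        · rw [prod_eval _ {(i, j), (i, k)} (fun z hz => by
            simp only [Finset.mem_insert, Finset.mem_singleton, not_or] at hz
            simp [sE, qE, h2.1, h2.2, hz.1, hz.2, M_zero])]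
          rw [Finset.prod_pair (by simp only [ne_eq, Prod.mk.injEq]; tauto)]
          simp [sE, qE, h2.1, h2.2, hjk, Ne.symm hjk, h1, M_two, M_four]
        · have n1 : ¬(i = a ∧ j = b) := fun h => h1 ⟨h.1.symm, h.2.symm⟩
          have n2 : ¬(i = a ∧ k = b) := fun h => h2 ⟨h.1.symm, h.2.symm⟩
          rw [prod_eval _ {(a, b), (i, j), (i, k)} (fun z hz => by
            simp only [Finset.mem_insert, Finset.mem_singleton, not_or] at hz
            simp [sE, qE, hz.1, hz.2.1, hz.2.2, M_zero])]
          rw [Finset.prod_insert (by simp only [Finset.mem_insert,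
              Finset.mem_singleton, Prod.mk.injEq]; tauto),
            Finset.prod_pair (by simp only [ne_eq, Prod.mk.injEq]; tauto)]
          simp [sE, qE, h1, h2, n1, n2, hjk, Ne.symm hjk, M_two]
    · have hz : (∏ r, ∏ c, M (sE a b i i' j k r c)) = 0 := by
        refine Finset.prod_eq_zero (Finset.mem_univ i) ?_
        refine Finset.prod_eq_zero (Finset.mem_univ j) ?_
        have he : sE a b i i' j k i j = (if (i, j) = (a, b) then 2 else 0) + 1 := by
          simp [sE, qE, Prod.ext_iff, hjk, hjk.symm, hii, hii.symm]
        rw [he]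
        by_cases hab : (i, j) = (a, b)
        · rw [if_pos hab]; exact M_three
        · rw [if_neg hab]; exact M_one
      rw [hz, if_neg hjk, if_neg hii]



lemma sq_integrable {P Q : ℕ} (i : Fin P) (j : Fin Q) :
    Integrable (fun x => x i j ^ 2) (ν P Q) := by
  simp_rw [sq_pt]
  exact mono_integrable _

/-- algebra helper : double sum of a diagonal ite -/
lemma double_sum_ite {α : Type*} [Fintype α] [DecidableEq α] (u v : ℝ) :
    ∑ i : α, ∑ i' : α, (if i = i' then u else v)
      = (Fintype.card α : ℝ)^2 * v + (Fintype.card α : ℝ) * (u - v) := by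
  have h : ∀ i i' : α, (if i = i' then u else v) = v + (if i = i' then u - v else 0) := by
    intro i i'; split_ifs <;> ring
  simp_rw [h, Finset.sum_add_distrib, Finset.sum_ite_eq, Finset.mem_univ, if_true]
  simp only [Finset.sum_const, Finset.card_univ, nsmul_eq_mul]
  ring

lemma double_sum_ite_pair (i : Fin P) (j : Fin Q) (u v : ℝ) :
    ∑ a : Fin P, ∑ b : Fin Q, (if a = i ∧ b = j then u else v)
      = (P : ℝ) * (Q : ℝ) * v + (u - v) := by
  have h : ∀ (a : Fin P) (b : Fin Q), (if a = i ∧ b = j then u else v)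
      = v + (if b = j then (if a = i then u - v else 0) else 0) := by
    intro a b
    by_cases h1 : a = i ∧ b = j
    · rw [if_pos h1, if_pos h1.2, if_pos h1.1]; ring
    · rcases not_and_or.mp h1 with h | h
      · by_cases hb : b = j
        · rw [if_neg h1, if_pos hb, if_neg h]; ring
        · rw [if_neg h1, if_neg hb]; ring
      · rw [if_neg h1, if_neg h]; ring
  simp_rw [h, Finset.sum_add_distrib, Finset.sum_ite_eq', Finset.mem_univ, if_true]
  simp only [Finset.sum_const, Finset.card_univ, nsmul_eq_mul, Fintype.card_fin]
  simp only [Finset.sum_ite_eq', Finset.mem_univ, if_true]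
  ring

lemma double_sum_ite_two (i i' : Fin P) (j j' : Fin Q) (hne : ¬(i = i' ∧ j = j')) (u v : ℝ) :
    ∑ a : Fin P, ∑ b : Fin Q, (if (a = i ∧ b = j) ∨ (a = i' ∧ b = j') then u else v)
      = (P : ℝ) * (Q : ℝ) * v + 2 * (u - v) := by
  have h : ∀ (a : Fin P) (b : Fin Q), (if (a = i ∧ b = j) ∨ (a = i' ∧ b = j') then u else v)
      = (if a = i ∧ b = j then u else v) + (if a = i' ∧ b = j' then u - v else 0) := by
    intro a b
    by_cases h1 : a = i ∧ b = j
    · by_cases h2 : a = i' ∧ b = j'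
      · exact absurd ⟨h1.1.symm.trans h2.1, h1.2.symm.trans h2.2⟩ hne
      · rw [if_pos (Or.inl h1), if_pos h1, if_neg h2]; ring
    · by_cases h2 : a = i' ∧ b = j'
      · rw [if_pos (Or.inr h2), if_neg h1, if_pos h2]; ring
      · rw [if_neg (by tauto), if_neg h1, if_neg h2]; ring
  simp_rw [h, Finset.sum_add_distrib, double_sum_ite_pair]
  ring

/-- pull an ite out of a double sum -/
lemma pull_ite {α : Type*} [Fintype α] (c : Prop) [Decidable c] (A B : α → α → ℝ) :
    (∑ i : α, ∑ i' : α, if c then A i i' else B i i')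
      = if c then (∑ i : α, ∑ i' : α, A i i') else (∑ i : α, ∑ i' : α, B i i') := by
  split_ifs <;> rfl


lemma pull_ite2 {α β : Type*} [Fintype α] [Fintype β] (c : Prop) [Decidable c]
    (A B : α → β → ℝ) :
    (∑ a : α, ∑ b : β, if c then A a b else B a b)
      = if c then (∑ a : α, ∑ b : β, A a b) else (∑ a : α, ∑ b : β, B a b) := by
  split_ifs <;> rfl

def fF (x : Fin P → Fin Q → ℝ) : ℝ := ∑ j, ∑ i, x i j ^ 2

def gF (x : Fin P → Fin Q → ℝ) : ℝ :=
  ∑ j, ∑ k, ∑ i, ∑ i', (x i j * x i k) * (x i' k * x i' j)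

lemma fF_integrable : Integrable (fun x => fF x) (ν P Q) :=
  integrable_finset_sum _ (fun j _ => integrable_finset_sum _ (fun i _ => sq_integrable i j))

lemma gF_integrable : Integrable (fun x => gF x) (ν P Q) :=
  integrable_finset_sum _ (fun j _ => integrable_finset_sum _ (fun k _ =>
    integrable_finset_sum _ (fun i _ => integrable_finset_sum _ (fun i' _ =>
      quartic_integrable i i' j k))))

lemma int_f : ∫ x, fF x ∂(ν P Q) = (P : ℝ) * (Q : ℝ) := by
  unfold fF
  rw [integral_finset_sum _ (fun j _ => integrable_finset_sum _
    (fun i _ => sq_integrable i j))]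
  have : ∀ j : Fin Q, ∫ x, ∑ i, x i j ^ 2 ∂(ν P Q) = (P : ℝ) := by
    intro j
    rw [integral_finset_sum _ (fun i _ => sq_integrable i j)]
    simp [int_sq]
  simp [this]
  ring

lemma int_g : ∫ x, gF x ∂(ν P Q)
    = (P : ℝ) * (Q : ℝ) * ((P : ℝ) + (Q : ℝ) + 1) := by
  unfold gF
  rw [integral_finset_sum _ (fun j _ => integrable_finset_sum _ (fun k _ =>
    integrable_finset_sum _ (fun i _ => integrable_finset_sum _ (fun i' _ =>
      quartic_integrable i i' j k))))]
  have h1 : ∀ j : Fin Q, ∫ x, ∑ k, ∑ i, ∑ i', (x i j * x i k) * (x i' k * x i' j) ∂(ν P Q)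
      = ∑ k, ∑ i : Fin P, ∑ i' : Fin P,
        (if j = k then (if i = i' then (3:ℝ) else 1) else (if i = i' then 1 else 0)) := by
    intro j
    rw [integral_finset_sum _ (fun k _ => integrable_finset_sum _ (fun i _ =>
      integrable_finset_sum _ (fun i' _ => quartic_integrable i i' j k)))]
    refine Finset.sum_congr rfl fun k _ => ?_
    rw [integral_finset_sum _ (fun i _ => integrable_finset_sum _ (fun i' _ =>
      quartic_integrable i i' j k))]
    refine Finset.sum_congr rfl fun i _ => ?_
    rw [integral_finset_sum _ (fun i' _ => quartic_integrable i i' j k)]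
    exact Finset.sum_congr rfl fun i' _ => quartic_val i i' j k
  simp_rw [h1, pull_ite2, double_sum_ite]
  simp only [Fintype.card_fin]
  push_cast
  ring


lemma sextic_comm (a : Fin P) (b : Fin Q) (i i' : Fin P) (j k : Fin Q) :
    (fun x : Fin P → Fin Q → ℝ => ((x i j * x i k) * (x i' k * x i' j)) * x a b ^ 2)
      = fun x => x a b ^ 2 * ((x i j * x i k) * (x i' k * x i' j)) :=
  funext fun x => mul_comm _ _

lemma sextic_integrable' (a : Fin P) (b : Fin Q) (i i' : Fin P) (j k : Fin Q) :
    Integrable (fun x => ((x i j * x i k) * (x i' k * x i' j)) * x a b ^ 2) (ν P Q) := by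
  rw [sextic_comm]
  exact sextic_integrable a b i i' j k

lemma sextic_val' (a : Fin P) (b : Fin Q) (i i' : Fin P) (j k : Fin Q) :
    ∫ x, ((x i j * x i k) * (x i' k * x i' j)) * x a b ^ 2 ∂(ν P Q)
      = if j = k then
          (if i = i' then (if a = i ∧ b = j then 15 else 3)
           else (if (a = i ∧ b = j) ∨ (a = i' ∧ b = j) then 3 else 1))
        else
          (if i = i' then (if (a = i ∧ b = j) ∨ (a = i ∧ b = k) then 3 else 1) else 0) := by
  rw [sextic_comm]
  exact sextic_val a b i i' j k

lemma fg_pt (x : Fin P → Fin Q → ℝ) :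
    fF x * gF x = ∑ j, ∑ k, ∑ i, ∑ i', ∑ b : Fin Q, ∑ a : Fin P,
      ((x i j * x i k) * (x i' k * x i' j)) * x a b ^ 2 := by
  rw [mul_comm]
  unfold fF gF
  simp_rw [Finset.sum_mul, Finset.mul_sum]

lemma fg_integrable : Integrable (fun x => fF x * gF x) (ν P Q) := by
  simp_rw [fg_pt]
  exact integrable_finset_sum _ (fun j _ => integrable_finset_sum _ (fun k _ =>
    integrable_finset_sum _ (fun i _ => integrable_finset_sum _ (fun i' _ =>
      integrable_finset_sum _ (fun b _ => integrable_finset_sum _ (fun a _ =>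
        sextic_integrable' a b i i' j k))))))

lemma inner_ab (i i' : Fin P) (j k : Fin Q) :
    (∑ a : Fin P, ∑ b : Fin Q,
      (if j = k then
          (if i = i' then (if a = i ∧ b = j then (15:ℝ) else 3)
           else (if (a = i ∧ b = j) ∨ (a = i' ∧ b = j) then 3 else 1))
        else
          (if i = i' then (if (a = i ∧ b = j) ∨ (a = i ∧ b = k) then 3 else 1) else 0)))
      = if j = k then
          (if i = i' then 3 * (P : ℝ) * (Q : ℝ) + 12 else (P : ℝ) * (Q : ℝ) + 4)
        else
          (if i = i' then (P : ℝ) * (Q : ℝ) + 4 else 0) := by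
  rw [pull_ite2]
  rcases eq_or_ne j k with rfl | hjk
  · rw [if_pos rfl, if_pos rfl, pull_ite2]
    rcases eq_or_ne i i' with rfl | hii
    · rw [if_pos rfl, if_pos rfl, double_sum_ite_pair]
      ring
    · rw [if_neg hii, if_neg hii,
        double_sum_ite_two i i' j j (by simp [hii]) 3 1]
      ring
  · rw [if_neg hjk, if_neg hjk, pull_ite2]
    rcases eq_or_ne i i' with rfl | hii
    · rw [if_pos rfl, if_pos rfl,
        double_sum_ite_two i i j k (by simp [hjk]) 3 1]
      ring
    · rw [if_neg hii, if_neg hii]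
      simp

lemma inner_ab2 (i i' : Fin P) (j k : Fin Q) :
    (∑ b : Fin Q, ∑ a : Fin P,
      (if j = k then
          (if i = i' then (if a = i ∧ b = j then (15:ℝ) else 3)
           else (if (a = i ∧ b = j) ∨ (a = i' ∧ b = j) then 3 else 1))
        else
          (if i = i' then (if (a = i ∧ b = j) ∨ (a = i ∧ b = k) then 3 else 1) else 0)))
      = if j = k then
          (if i = i' then 3 * (P : ℝ) * (Q : ℝ) + 12 else (P : ℝ) * (Q : ℝ) + 4)
        else
          (if i = i' then (P : ℝ) * (Q : ℝ) + 4 else 0) := by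
  rw [Finset.sum_comm]
  exact inner_ab i i' j k

lemma int_fg : ∫ x, fF x * gF x ∂(ν P Q)
    = (P : ℝ) * (Q : ℝ) * ((P : ℝ) + (Q : ℝ) + 1) * ((P : ℝ) * (Q : ℝ) + 4) := by
  simp_rw [fg_pt]
  rw [integral_finset_sum _ (fun j _ => integrable_finset_sum _ (fun k _ =>
    integrable_finset_sum _ (fun i _ => integrable_finset_sum _ (fun i' _ =>
      integrable_finset_sum _ (fun b _ => integrable_finset_sum _ (fun a _ =>
        sextic_integrable' a b i i' j k))))))]
  have h1 : ∀ j : Fin Q, ∫ x, ∑ k, ∑ i, ∑ i', ∑ b : Fin Q, ∑ a : Fin P,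
        ((x i j * x i k) * (x i' k * x i' j)) * x a b ^ 2 ∂(ν P Q)
      = ∑ k, ∑ i : Fin P, ∑ i' : Fin P,
          (if j = k then
            (if i = i' then 3 * (P : ℝ) * (Q : ℝ) + 12 else (P : ℝ) * (Q : ℝ) + 4)
          else
            (if i = i' then (P : ℝ) * (Q : ℝ) + 4 else 0)) := by
    intro j
    rw [integral_finset_sum _ (fun k _ =>
      integrable_finset_sum _ (fun i _ => integrable_finset_sum _ (fun i' _ =>
        integrable_finset_sum _ (fun b _ => integrable_finset_sum _ (fun a _ =>
          sextic_integrable' a b i i' j k)))))]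
    refine Finset.sum_congr rfl fun k _ => ?_
    rw [integral_finset_sum _ (fun i _ => integrable_finset_sum _ (fun i' _ =>
        integrable_finset_sum _ (fun b _ => integrable_finset_sum _ (fun a _ =>
          sextic_integrable' a b i i' j k))))]
    refine Finset.sum_congr rfl fun i _ => ?_
    rw [integral_finset_sum _ (fun i' _ =>
        integrable_finset_sum _ (fun b _ => integrable_finset_sum _ (fun a _ =>
          sextic_integrable' a b i i' j k)))]
    refine Finset.sum_congr rfl fun i' _ => ?_
    rw [integral_finset_sum _ (fun b _ => integrable_finset_sum _ (fun a _ =>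
          sextic_integrable' a b i i' j k))]
    rw [← inner_ab2 i i' j k]
    refine Finset.sum_congr rfl fun b _ => ?_
    rw [integral_finset_sum _ (fun a _ => sextic_integrable' a b i i' j k)]
    exact Finset.sum_congr rfl fun a _ => sextic_val' a b i i' j k
  simp_rw [h1, pull_ite2, double_sum_ite]
  simp only [Fintype.card_fin]
  ring



lemma ν_def (P Q : ℕ) :
    ν P Q = Measure.pi fun _ : Fin P => Measure.pi fun _ : Fin Q => gaussianReal 0 1 := rfl

lemma fF_def {P Q : ℕ} (x : Fin P → Fin Q → ℝ) : fF x = ∑ j, ∑ i, x i j ^ 2 := rfl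

lemma gF_def {P Q : ℕ} (x : Fin P → Fin Q → ℝ) :
    gF x = ∑ j, ∑ k, ∑ i, ∑ i', (x i j * x i k) * (x i' k * x i' j) := rfl

lemma measurable_entry (i : Fin P) (j : Fin Q) :
    Measurable (fun x : Fin P → Fin Q → ℝ => x i j) :=
  (measurable_pi_apply j).comp (measurable_pi_apply i)

lemma measurable_fF : Measurable (fun x : Fin P → Fin Q → ℝ => fF x) := by
  simp_rw [fF_def]
  exact Finset.measurable_sum _ (fun j _ => Finset.measurable_sum _ (fun i _ =>
    (measurable_entry i j).pow_const 2))

lemma measurable_gF : Measurable (fun x : Fin P → Fin Q → ℝ => gF x) := by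
  simp_rw [gF_def]
  exact Finset.measurable_sum _ (fun j _ => Finset.measurable_sum _ (fun k _ =>
    Finset.measurable_sum _ (fun i _ => Finset.measurable_sum _ (fun i' _ =>
      (((measurable_entry i j).mul (measurable_entry i k)).mul
        ((measurable_entry i' k).mul (measurable_entry i' j)))))))

/-- covariance formula for probability measures -/
lemma rvCov_eq_sub {Ω : Type*} [MeasurableSpace Ω] (μ : Measure Ω) [IsProbabilityMeasure μ]
    (f g : Ω → ℝ) (hf : Integrable f μ) (hg : Integrable g μ)
    (hfg : Integrable (fun ω => f ω * g ω) μ) :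
    rvCov f g μ = (∫ ω, f ω * g ω ∂μ) - (∫ ω, f ω ∂μ) * (∫ ω, g ω ∂μ) := by
  rw [rvCov]
  set a := ∫ ω, f ω ∂μ with ha
  set b := ∫ ω, g ω ∂μ with hb
  have h : (fun ω => (f ω - a) * (g ω - b))
      = fun ω => (f ω * g ω - a * g ω) - (b * f ω - a * b) := funext fun ω => by ring
  rw [h, integral_sub (f := fun ω => f ω * g ω - a * g ω) (g := fun ω => b * f ω - a * b)
      (hfg.sub (hg.const_mul a)) ((hf.const_mul b).sub (integrable_const _)),
    integral_sub (f := fun ω => f ω * g ω) (g := fun ω => a * g ω) hfg (hg.const_mul a),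
    integral_sub (f := fun ω => b * f ω) (g := fun _ => a * b) (hf.const_mul b)
      (integrable_const _),
    integral_const_mul, integral_const_mul, integral_const]
  simp [← ha, ← hb]
  ring

lemma cov_nu : rvCov (fun x => fF x) (fun x => gF x) (ν P Q)
    = 4 * (P : ℝ) * (Q : ℝ) * ((P : ℝ) + (Q : ℝ) + 1) := by
  rw [rvCov_eq_sub _ _ _ fF_integrable gF_integrable fg_integrable, int_f, int_g, int_fg]
  ring


end JiangCov
end
end JiangCovProof

open JiangCov in
/-- **(ii) of Lemma 2.4 (Jiang).**  Let `ε ∈ (0,1)`, let `pₙ, qₙ` be positive integers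
with `ε ≤ pₙ/qₙ ≤ ε⁻¹` for all `n` and `pₙ → ∞`, and let `Xₙ` be a `pₙ × qₙ` random
matrix with i.i.d. standard normal entries.  Then
`Cov(tr(XₙᵀXₙ), tr((XₙᵀXₙ)²)) ~ 4 pₙ qₙ (pₙ + qₙ)` as `n → ∞`. -/
theorem covariance_trace_trace_sq_asymptotic
    (ε : ℝ) (hε0 : 0 < ε) (hε1 : ε < 1)
    (Ω : ℕ → Type*) [∀ n, MeasurableSpace (Ω n)]
    (μ : ∀ n, Measure (Ω n)) (hμ : ∀ n, IsProbabilityMeasure (μ n))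
    (p q : ℕ → ℕ) (hp0 : ∀ n, 0 < p n) (hq0 : ∀ n, 0 < q n)
    (hratio : ∀ n, ε ≤ (p n : ℝ) / (q n : ℝ) ∧ (p n : ℝ) / (q n : ℝ) ≤ ε⁻¹)
    (hp : Tendsto (fun n => (p n : ℝ)) atTop atTop)
    (X : ∀ n, Ω n → Fin (p n) → Fin (q n) → ℝ)
    (hX : ∀ n, Measure.map (X n) (μ n) =
      Measure.pi fun _ : Fin (p n) => Measure.pi fun _ : Fin (q n) => gaussianReal 0 1) :
    Tendsto
      (fun n =>
        rvCov (fun ω => Matrix.trace ((Matrix.of (X n ω))ᵀ * Matrix.of (X n ω)))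
            (fun ω => Matrix.trace (((Matrix.of (X n ω))ᵀ * Matrix.of (X n ω)) ^ 2)) (μ n) /
          (4 * (p n : ℝ) * (q n : ℝ) * ((p n : ℝ) + (q n : ℝ))))
      atTop (nhds 1) := by
  have key : ∀ n, rvCov (fun ω => Matrix.trace ((Matrix.of (X n ω))ᵀ * Matrix.of (X n ω)))
      (fun ω => Matrix.trace (((Matrix.of (X n ω))ᵀ * Matrix.of (X n ω)) ^ 2)) (μ n)
      = 4 * (p n : ℝ) * (q n : ℝ) * ((p n : ℝ) + (q n : ℝ) + 1) := by
    intro n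
    haveI := hμ n
    have hmap : Measure.map (X n) (μ n) = ν (p n) (q n) := by rw [ν_def]; exact hX n
    have hae : AEMeasurable (X n) (μ n) := by
      by_contra h
      have h0 := Measure.map_of_not_aemeasurable h
      rw [hmap] at h0
      exact (IsProbabilityMeasure.ne_zero (ν (p n) (q n))) h0
    have ht1 : (fun ω => Matrix.trace ((Matrix.of (X n ω))ᵀ * Matrix.of (X n ω)))
        = fun ω => fF (X n ω) := by
      funext ω
      rw [fF_def]
      simp only [Matrix.trace, Matrix.diag, Matrix.mul_apply, Matrix.transpose_apply,
        Matrix.of_apply, pow_two]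
    have ht2 : (fun ω => Matrix.trace (((Matrix.of (X n ω))ᵀ * Matrix.of (X n ω)) ^ 2))
        = fun ω => gF (X n ω) := by
      funext ω
      rw [gF_def, pow_two]
      simp only [Matrix.trace, Matrix.diag, Matrix.mul_apply, Matrix.transpose_apply,
        Matrix.of_apply]
      exact Finset.sum_congr rfl fun j _ => Finset.sum_congr rfl fun k _ =>
        Finset.sum_mul_sum _ _ _ _
    rw [ht1, ht2]
    have c1 : ∫ ω, fF (X n ω) ∂(μ n) = ∫ x, fF x ∂(ν (p n) (q n)) := by
      rw [← hmap, integral_map hae measurable_fF.aestronglyMeasurable]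
    have c2 : ∫ ω, gF (X n ω) ∂(μ n) = ∫ x, gF x ∂(ν (p n) (q n)) := by
      rw [← hmap, integral_map hae measurable_gF.aestronglyMeasurable]
    have hcov : rvCov (fun ω => fF (X n ω)) (fun ω => gF (X n ω)) (μ n)
        = rvCov (fun x => fF x) (fun x => gF x) (ν (p n) (q n)) := by
      rw [rvCov, rvCov, c1, c2, ← hmap,
        integral_map (f := fun x => (fF x - ∫ ω', fF ω' ∂Measure.map (X n) (μ n)) *
          (gF x - ∫ ω', gF ω' ∂Measure.map (X n) (μ n))) hae (((measurable_fF.sub measurable_const).mul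
          (measurable_gF.sub measurable_const)).aestronglyMeasurable)]
    rw [hcov, cov_nu]
  have hval : (fun n =>
      rvCov (fun ω => Matrix.trace ((Matrix.of (X n ω))ᵀ * Matrix.of (X n ω)))
          (fun ω => Matrix.trace (((Matrix.of (X n ω))ᵀ * Matrix.of (X n ω)) ^ 2)) (μ n) /
        (4 * (p n : ℝ) * (q n : ℝ) * ((p n : ℝ) + (q n : ℝ))))
      = fun n => 1 + ((p n : ℝ) + (q n : ℝ))⁻¹ := by
    funext n
    rw [key n]
    have h1 : (p n : ℝ) ≠ 0 := by
      have := hp0 n; positivity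
    have h2 : (q n : ℝ) ≠ 0 := by
      have := hq0 n; positivity
    have h3 : (p n : ℝ) + (q n : ℝ) ≠ 0 := by
      have := hp0 n; positivity
    field_simp
  rw [hval]
  have hpq : Tendsto (fun n => (p n : ℝ) + (q n : ℝ)) atTop atTop :=
    tendsto_atTop_mono (fun n => le_add_of_nonneg_right (by positivity)) hp
  have h0 : Tendsto (fun n => ((p n : ℝ) + (q n : ℝ))⁻¹) atTop (nhds 0) :=
    hpq.inv_tendsto_atTop
  simpa using tendsto_const_nhds.add h0
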